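/- Let G be an n-player δ-CSP game and let Ǧ be any constant-sum polymatrix game on the same players and pure-strategy sets whose global utilities ǔ satisfy |u_i(ρ) − ǔ_i(ρ)| ≤ δ for all players i and pure profiles ρ. Then the marginal strategy profile of any coarse correlated equilibrium of G is a 2nδ-Nash equilibrium of Ǧ. -/

import Mathlib

open Finset

section GameTheory

variable {N : Type*} [Fintype N] [DecidableEq N]
variable {P : N → Type*} [∀ j, Fintype (P j)] [∀ j, DecidableEq (P j)] [∀ j, Nonempty (P j)]

/-- A probability distribution on a finite type. -/
def IsDist {A : Type*} [Fintype A] (μ : A → ℝ) : Prop :=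
  (∀ a, 0 ≤ μ a) ∧ ∑ a, μ a = 1

/-- A profile of mixed strategies: one probability distribution per player. -/
def IsMixedProfile (s : ∀ j, P j → ℝ) : Prop := ∀ j, IsDist (s j)

/-- The mixed strategy that plays the pure strategy `a` with probability 1. -/
def pureMix {A : Type*} [DecidableEq A] (a : A) : A → ℝ := fun b => if b = a then 1 else 0

/-- Expected utility of player `i` under the mixed-strategy profile `s`:
`u_i(s) = Σ_ρ (Π_j s_j(ρ_j)) u_i(ρ)`. -/
def mixedUtil (u : N → (∀ j, P j) → ℝ) (s : ∀ j, P j → ℝ) (i : N) : ℝ :=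
  ∑ ρ : ∀ j, P j, (∏ j, s j (ρ j)) * u i ρ

/-- `s` is an ε-Nash equilibrium: no player gains more than ε by deviating to a
pure strategy. -/
def IsEpsNash (u : N → (∀ j, P j) → ℝ) (s : ∀ j, P j → ℝ) (ε : ℝ) : Prop :=
  ∀ i, ∀ ρi' : P i,
    mixedUtil u (Function.update s i (pureMix ρi')) i - mixedUtil u s i ≤ ε

/-- `μ` is an ε-coarse correlated equilibrium. -/
def IsEpsCCE (u : N → (∀ j, P j) → ℝ) (μ : (∀ j, P j) → ℝ) (ε : ℝ) : Prop :=
  ∀ i, ∀ ρi' : P i,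
    ∑ ρ : ∀ j, P j, μ ρ * (u i (Function.update ρ i ρi') - u i ρ) ≤ ε

/-- The marginal strategy of player `i` under the joint distribution `μ`. -/
def marginal (μ : (∀ j, P j) → ℝ) (i : N) (pi : P i) : ℝ :=
  ∑ ρ : ∀ j, P j, if ρ i = pi then μ ρ else 0

/-- Neighbors of `i` in the polymatrix graph, i.e. the edges `E_i` containing `i`. -/
def neighbors (Adj : N → N → Bool) (i : N) : Finset N :=
  Finset.univ.filter (fun j => Adj i j)

/-- Global utility of player `i` in the polymatrix game given by graph `Adj`
and edgewise utilities `U`. -/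
def polyUtil (Adj : N → N → Bool) (U : ∀ i j : N, P i → P j → ℝ) (i : N)
    (ρ : ∀ j, P j) : ℝ :=
  ∑ j ∈ neighbors Adj i, U i j (ρ i) (ρ j)

/-- Expected utility of `i` in the two-player subgame with `j`, under mixed
strategies `si`, `sj`. -/
def subUtil (U : ∀ i j : N, P i → P j → ℝ) (i j : N) (si : P i → ℝ) (sj : P j → ℝ) : ℝ :=
  ∑ pi : P i, ∑ pj : P j, si pi * sj pj * U i j pi pj

/-- `Adj` is a valid edge indicator: symmetric and irreflexive. -/
def IsAdj (Adj : N → N → Bool) : Prop :=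
  (∀ i j, Adj i j = Adj j i) ∧ (∀ i, Adj i i = false)

/-- `u` is the global utility function of the polymatrix game `(Adj, U)`. -/
def IsPolymatrix (u : N → (∀ j, P j) → ℝ) (Adj : N → N → Bool)
    (U : ∀ i j : N, P i → P j → ℝ) : Prop :=
  IsAdj Adj ∧ ∀ i ρ, u i ρ = polyUtil Adj U i ρ

/-- The polymatrix game `(Adj, U)` is constant-sum on every edge. -/
def IsConstantSumPoly (Adj : N → N → Bool) (U : ∀ i j : N, P i → P j → ℝ) : Prop :=
  ∀ i j, Adj i j → ∃ c : ℝ, ∀ (pi : P i) (pj : P j), U i j pi pj + U j i pj pi = c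

/-- `(si, sj)` is a γ-Nash equilibrium of the two-player subgame between `i` and `j`. -/
def SubgameEpsNash (U : ∀ i j : N, P i → P j → ℝ) (i j : N) (si : P i → ℝ)
    (sj : P j → ℝ) (γ : ℝ) : Prop :=
  (∀ pi' : P i, subUtil U i j (pureMix pi') sj - subUtil U i j si sj ≤ γ) ∧
  (∀ pj' : P j, subUtil U j i (pureMix pj') si - subUtil U j i sj si ≤ γ)

end GameTheory


section AuxProof

variable {N : Type*} [Fintype N] [DecidableEq N]
variable {P : N → Type*} [∀ j, Fintype (P j)] [∀ j, DecidableEq (P j)] [∀ j, Nonempty (P j)]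

lemma marginal_nonneg' (μ : (∀ j, P j) → ℝ) (hμ : IsDist μ) (i : N) (pi : P i) :
    0 ≤ marginal μ i pi := by
  apply Finset.sum_nonneg
  intro ρ _
  split
  · exact hμ.1 ρ
  · exact le_refl 0

lemma marginal_apply' (μ : (∀ j, P j) → ℝ) (i : N) (f : P i → ℝ) :
    ∑ pi, marginal μ i pi * f pi = ∑ ρ : ∀ j, P j, μ ρ * f (ρ i) := by
  unfold marginal
  simp_rw [Finset.sum_mul, ite_mul, zero_mul]
  rw [Finset.sum_comm]
  simp [Finset.sum_ite_eq]

lemma marginal_sum_one' (μ : (∀ j, P j) → ℝ) (hμ : IsDist μ) (i : N) :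
    ∑ pi, marginal μ i pi = 1 := by
  have := marginal_apply' μ i (fun _ => 1)
  simpa [hμ.2] using this

lemma sum_prod_pair' (s : ∀ j, P j → ℝ) (hs : ∀ j, ∑ a, s j a = 1)
    {i j : N} (hij : i ≠ j) (g : P i → P j → ℝ) :
    ∑ ρ : ∀ k, P k, (∏ k, s k (ρ k)) * g (ρ i) (ρ j)
      = ∑ pi, ∑ pj, s i pi * s j pj * g pi pj := by
  classical
  set h : P i → P j → ∀ k, P k → ℝ := fun pi pj =>
    Function.update (Function.update s i (fun a => if a = pi then s i a else 0)) j
      (fun a => if a = pj then s j a else 0) with hh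
  have key1 : ∀ (pi : P i) (pj : P j) (ρ : ∀ k, P k) (k : N),
      h pi pj k (ρ k) = (if k = i then (if ρ i = pi then (1:ℝ) else 0) else 1) *
        ((if k = j then (if ρ j = pj then (1:ℝ) else 0) else 1) * s k (ρ k)) := by
    intro pi pj ρ k
    by_cases hkj : k = j
    · subst hkj
      simp only [hh]
      simp only [Function.update_self, Ne.symm hij, if_false, if_true]
      split_ifs <;> ring
    · by_cases hki : k = i
      · subst hki
        simp only [hh]
        rw [Function.update_of_ne hkj, Function.update_self]
        simp only [hkj, if_false, if_true]
        split_ifs <;> ring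
      · simp only [hh]
        rw [Function.update_of_ne hkj, Function.update_of_ne hki]
        simp [hkj, hki]
  have key2 : ∀ (pi : P i) (pj : P j) (ρ : ∀ k, P k),
      (∏ k, h pi pj k (ρ k)) * g pi pj
        = if ρ j = pj then (if ρ i = pi then (∏ k, s k (ρ k)) * g pi pj else 0) else 0 := by
    intro pi pj ρ
    have : ∏ k, h pi pj k (ρ k)
        = (∏ k, if k = i then (if ρ i = pi then (1:ℝ) else 0) else 1) *
          ((∏ k, if k = j then (if ρ j = pj then (1:ℝ) else 0) else 1) *
            ∏ k, s k (ρ k)) := by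
      rw [← Finset.prod_mul_distrib, ← Finset.prod_mul_distrib]
      exact Finset.prod_congr rfl fun k _ => key1 pi pj ρ k
    rw [this, Finset.prod_ite_eq' Finset.univ i, Finset.prod_ite_eq' Finset.univ j]
    simp only [Finset.mem_univ, if_true]
    split_ifs <;> ring
  have keyS : ∀ (pi : P i) (pj : P j) (k : N),
      (∑ a, h pi pj k a) = (if k = i then s i pi else 1) * (if k = j then s j pj else 1) := by
    intro pi pj k
    by_cases hkj : k = j
    · subst hkj
      simp only [hh]
      simp only [Function.update_self, Ne.symm hij, if_false, if_true, one_mul]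
      rw [Finset.sum_ite_eq' Finset.univ pj]
      simp
    · by_cases hki : k = i
      · subst hki
        simp only [hh]
        rw [Function.update_of_ne hkj, Function.update_self]
        simp only [hkj, if_false, if_true, mul_one]
        rw [Finset.sum_ite_eq' Finset.univ pi]
        simp
      · simp only [hh]
        rw [Function.update_of_ne hkj, Function.update_of_ne hki]
        simp [hkj, hki, hs k]
  calc ∑ ρ : ∀ k, P k, (∏ k, s k (ρ k)) * g (ρ i) (ρ j)
      = ∑ ρ : ∀ k, P k, ∑ pi, ∑ pj, (∏ k, h pi pj k (ρ k)) * g pi pj := by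
        refine Finset.sum_congr rfl fun ρ _ => ?_
        simp_rw [key2]
        simp [Finset.sum_ite_eq]
    _ = ∑ pi, ∑ pj, ∑ ρ : ∀ k, P k, (∏ k, h pi pj k (ρ k)) * g pi pj := by
        rw [Finset.sum_comm]
        exact Finset.sum_congr rfl fun pi _ => Finset.sum_comm
    _ = ∑ pi, ∑ pj, s i pi * s j pj * g pi pj := by
        refine Finset.sum_congr rfl fun pi _ => Finset.sum_congr rfl fun pj _ => ?_
        rw [← Finset.sum_mul, ← Fintype.prod_sum]
        congr 1
        calc ∏ k, ∑ a, h pi pj k a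
            = ∏ k, ((if k = i then s i pi else 1) * (if k = j then s j pj else 1)) :=
              Finset.prod_congr rfl fun k _ => keyS pi pj k
          _ = s i pi * s j pj := by
              rw [Finset.prod_mul_distrib, Finset.prod_ite_eq' Finset.univ i,
                Finset.prod_ite_eq' Finset.univ j]
              simp

lemma subUtil_pure_left' (U : ∀ i j : N, P i → P j → ℝ) (i j : N) (a : P i) (t : P j → ℝ) :
    subUtil U i j (pureMix a) t = ∑ pj, t pj * U i j a pj := by
  unfold subUtil pureMix
  rw [Finset.sum_comm]
  simp_rw [ite_mul, one_mul, zero_mul]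
  simp [Finset.sum_ite_eq']

lemma neighbors_ne' (Adj : N → N → Bool) (hA : IsAdj Adj) {i j : N}
    (hj : j ∈ neighbors Adj i) : i ≠ j := by
  intro h
  subst h
  have := hA.2 i
  unfold neighbors at hj
  simp [this] at hj

lemma mixedUtil_poly' (Adj : N → N → Bool) (U : ∀ i j : N, P i → P j → ℝ)
    (hA : IsAdj Adj) (s' : ∀ j, P j → ℝ) (hs : ∀ j, ∑ a, s' j a = 1) (i : N) :
    mixedUtil (fun i ρ => polyUtil Adj U i ρ) s' i
      = ∑ j ∈ neighbors Adj i, subUtil U i j (s' i) (s' j) := by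
  unfold mixedUtil polyUtil subUtil
  simp_rw [Finset.mul_sum]
  rw [Finset.sum_comm]
  exact Finset.sum_congr rfl fun j hj => sum_prod_pair' s' hs (neighbors_ne' Adj hA hj) (U i j)

lemma cce_dev' (Adj : N → N → Bool) (U : ∀ i j : N, P i → P j → ℝ)
    (hA : IsAdj Adj) (μ : (∀ j, P j) → ℝ) (i : N) (a : P i) :
    ∑ ρ : ∀ j, P j, μ ρ * polyUtil Adj U i (Function.update ρ i a)
      = ∑ j ∈ neighbors Adj i, subUtil U i j (pureMix a) (marginal μ j) := by
  unfold polyUtil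
  simp_rw [Finset.mul_sum]
  rw [Finset.sum_comm]
  refine Finset.sum_congr rfl fun j hj => ?_
  have hij : i ≠ j := neighbors_ne' Adj hA hj
  rw [subUtil_pure_left', marginal_apply']
  refine Finset.sum_congr rfl fun ρ _ => ?_
  rw [Function.update_self, Function.update_of_ne (Ne.symm hij)]

end AuxProof

/-- If `G` is an n-player δ-CSP game via the constant-sum polymatrix game `Ǧ`,
then the marginal strategy profile of any CCE of `G` is a 2nδ-Nash equilibrium of `Ǧ`. -/
theorem cce_marginal_is_two_n_delta_nash_of_check_game
    {N : Type*} [Fintype N] [DecidableEq N]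
    {P : N → Type*} [∀ j, Fintype (P j)] [∀ j, DecidableEq (P j)] [∀ j, Nonempty (P j)]
    (u : N → (∀ j, P j) → ℝ) (δ : ℝ)
    (Adj : N → N → Bool) (U : ∀ i j : N, P i → P j → ℝ)
    (hAdj : IsAdj Adj) (hcs : IsConstantSumPoly Adj U)
    (hδ : ∀ i ρ, |u i ρ - polyUtil Adj U i ρ| ≤ δ)
    (μ : (∀ j, P j) → ℝ) (hμd : IsDist μ) (hμ : IsEpsCCE u μ 0) :
    IsEpsNash (fun i ρ => polyUtil Adj U i ρ) (fun j => marginal μ j)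
      (2 * (Fintype.card N : ℝ) * δ) := by
  classical
  intro i ρi'
  set s : ∀ j, P j → ℝ := fun j => marginal μ j with hsdef
  have hsd : ∀ j, ∑ a, s j a = 1 := fun j => marginal_sum_one' μ hμd j
  have hs0 : ∀ j a, 0 ≤ s j a := fun j a => marginal_nonneg' μ hμd j a
  have hδ0 : 0 ≤ δ := le_trans (abs_nonneg _) (hδ i (Classical.arbitrary _))
  set v : N → ℝ := fun k => ∑ ρ : ∀ j, P j, μ ρ * polyUtil Adj U k ρ with hvdef
  set w : N → ℝ := fun k => ∑ j ∈ neighbors Adj k, subUtil U k j (s k) (s j) with hwdef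
  have hw : ∀ k, mixedUtil (fun i ρ => polyUtil Adj U i ρ) s k = w k := fun k =>
    mixedUtil_poly' Adj U hAdj s hsd k
  -- deviation payoff formula
  have hdev : ∀ (k : N) (a : P k),
      mixedUtil (fun i ρ => polyUtil Adj U i ρ) (Function.update s k (pureMix a)) k
        = ∑ j ∈ neighbors Adj k, subUtil U k j (pureMix a) (s j) := by
    intro k a
    have hupd : ∀ j, ∑ a', (Function.update s k (pureMix a)) j a' = 1 := by
      intro j
      by_cases hjk : j = k
      · subst hjk
        rw [Function.update_self]
        unfold pureMix
        simp [Finset.sum_ite_eq']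
      · rw [Function.update_of_ne hjk]
        exact hsd j
    rw [mixedUtil_poly' Adj U hAdj _ hupd k]
    refine Finset.sum_congr rfl fun j hj => ?_
    have hkj : k ≠ j := neighbors_ne' Adj hAdj hj
    rw [Function.update_self, Function.update_of_ne (Ne.symm hkj)]
  -- transferred CCE bound
  have hcce' : ∀ (k : N) (a : P k),
      (∑ j ∈ neighbors Adj k, subUtil U k j (pureMix a) (s j)) - v k ≤ 2 * δ := by
    intro k a
    have h0 := hμ k a
    have key : ∑ ρ : ∀ j, P j,
        μ ρ * (polyUtil Adj U k (Function.update ρ k a) - polyUtil Adj U k ρ) ≤ 2 * δ := by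
      have step : ∀ ρ : ∀ j, P j,
          μ ρ * (polyUtil Adj U k (Function.update ρ k a) - polyUtil Adj U k ρ)
            ≤ μ ρ * ((u k (Function.update ρ k a) - u k ρ) + 2 * δ) := by
        intro ρ
        have h1 := abs_le.mp (hδ k (Function.update ρ k a))
        have h2 := abs_le.mp (hδ k ρ)
        have := hμd.1 ρ
        nlinarith [h1.1, h1.2, h2.1, h2.2]
      calc ∑ ρ : ∀ j, P j,
            μ ρ * (polyUtil Adj U k (Function.update ρ k a) - polyUtil Adj U k ρ)
          ≤ ∑ ρ : ∀ j, P j, μ ρ * ((u k (Function.update ρ k a) - u k ρ) + 2 * δ) :=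
            Finset.sum_le_sum fun ρ _ => step ρ
        _ = (∑ ρ : ∀ j, P j, μ ρ * (u k (Function.update ρ k a) - u k ρ))
              + (∑ ρ : ∀ j, P j, μ ρ) * (2 * δ) := by
            simp_rw [mul_add, Finset.sum_add_distrib, Finset.sum_mul]
        _ ≤ 0 + 1 * (2 * δ) := by
            rw [hμd.2]
            exact add_le_add_left h0 _
        _ = 2 * δ := by ring
    have hsplit : ∑ ρ : ∀ j, P j,
        μ ρ * (polyUtil Adj U k (Function.update ρ k a) - polyUtil Adj U k ρ)
          = (∑ ρ : ∀ j, P j, μ ρ * polyUtil Adj U k (Function.update ρ k a)) - v k := by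
      rw [hvdef]
      simp [mul_sub, Finset.sum_sub_distrib]
    rw [hsplit, cce_dev' Adj U hAdj μ k a] at key
    exact key
  -- w ≤ v + 2δ
  have hwv : ∀ k, w k ≤ v k + 2 * δ := by
    intro k
    have hwk : w k = ∑ a : P k, s k a *
        (∑ j ∈ neighbors Adj k, subUtil U k j (pureMix a) (s j)) := by
      rw [hwdef]
      simp_rw [Finset.mul_sum]
      rw [Finset.sum_comm]
      refine Finset.sum_congr rfl fun j _ => ?_
      simp_rw [subUtil_pure_left']
      unfold subUtil
      simp_rw [Finset.mul_sum]
      exact Finset.sum_congr rfl fun a _ => Finset.sum_congr rfl fun pj _ => by ring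
    rw [hwk]
    calc ∑ a : P k, s k a * (∑ j ∈ neighbors Adj k, subUtil U k j (pureMix a) (s j))
        ≤ ∑ a : P k, s k a * (v k + 2 * δ) := by
          refine Finset.sum_le_sum fun a _ => ?_
          exact mul_le_mul_of_nonneg_left (by linarith [hcce' k a]) (hs0 k a)
      _ = v k + 2 * δ := by rw [← Finset.sum_mul, hsd k, one_mul]
  -- total conservation : ∑ v = ∑ w
  have hv : ∀ k, v k = ∑ j ∈ neighbors Adj k, ∑ ρ : ∀ l, P l, μ ρ * U k j (ρ k) (ρ j) := by
    intro k
    rw [hvdef]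
    unfold polyUtil
    simp_rw [Finset.mul_sum]
    rw [Finset.sum_comm]
  have hsumzero : ∑ k, (v k - w k) = 0 := by
    have hrepr : ∀ k, v k - w k = ∑ j, (if Adj k j then
        ((∑ ρ : ∀ l, P l, μ ρ * U k j (ρ k) (ρ j)) - subUtil U k j (s k) (s j)) else 0) := by
      intro k
      rw [hv k, hwdef]
      rw [← Finset.sum_sub_distrib]
      unfold neighbors
      rw [Finset.sum_filter]
    set E : N → N → ℝ := fun k j => (if Adj k j then
        ((∑ ρ : ∀ l, P l, μ ρ * U k j (ρ k) (ρ j)) - subUtil U k j (s k) (s j)) else 0)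
      with hE
    have hanti : ∀ k j, E k j = - E j k := by
      intro k j
      by_cases hA : Adj k j = true
      · have hA' : Adj j k = true := by rw [← hAdj.1]; exact hA
        obtain ⟨c, hc⟩ := hcs k j hA
        have h1 : (∑ ρ : ∀ l, P l, μ ρ * U k j (ρ k) (ρ j))
            + (∑ ρ : ∀ l, P l, μ ρ * U j k (ρ j) (ρ k)) = c := by
          rw [← Finset.sum_add_distrib]
          have : ∀ ρ : ∀ l, P l, μ ρ * U k j (ρ k) (ρ j) + μ ρ * U j k (ρ j) (ρ k)
              = μ ρ * c := by
            intro ρ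
            rw [← mul_add, hc (ρ k) (ρ j)]
          simp_rw [this]
          rw [← Finset.sum_mul, hμd.2, one_mul]
        have h2 : subUtil U k j (s k) (s j) + subUtil U j k (s j) (s k) = c := by
          have e1 : subUtil U j k (s j) (s k)
              = ∑ pk : P k, ∑ pj : P j, s j pj * s k pk * U j k pj pk := by
            unfold subUtil
            exact Finset.sum_comm
          rw [e1]
          unfold subUtil
          rw [← Finset.sum_add_distrib]
          have inner : ∀ pk : P k, (∑ pj : P j, s k pk * s j pj * U k j pk pj)
              + (∑ pj : P j, s j pj * s k pk * U j k pj pk)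
              = ∑ pj : P j, s k pk * s j pj * c := by
            intro pk
            rw [← Finset.sum_add_distrib]
            refine Finset.sum_congr rfl fun pj _ => ?_
            linear_combination s k pk * s j pj * hc pk pj
          simp_rw [inner]
          simp_rw [mul_assoc]
          rw [← Finset.sum_mul_sum]
          rw [hsd k, one_mul, ← Finset.sum_mul, hsd j, one_mul]
        simp only [hE]
        rw [if_pos hA, if_pos hA']
        linarith
      · have hA' : ¬ (Adj j k = true) := by rw [← hAdj.1]; exact hA
        simp only [hE]
        rw [if_neg hA, if_neg hA']
        ring
    have : (∑ k, ∑ j, E k j) = - ∑ k, ∑ j, E k j := by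
      calc (∑ k, ∑ j, E k j) = ∑ k, ∑ j, (- E j k) :=
            Finset.sum_congr rfl fun k _ => Finset.sum_congr rfl fun j _ => hanti k j
        _ = - ∑ k, ∑ j, E j k := by simp [Finset.sum_neg_distrib]
        _ = - ∑ k, ∑ j, E k j := by rw [Finset.sum_comm]
    have hz : (∑ k, ∑ j, E k j) = 0 := by linarith
    calc ∑ k, (v k - w k) = ∑ k, ∑ j, E k j := Finset.sum_congr rfl fun k _ => hrepr k
      _ = 0 := hz
  -- v i - w i ≤ 2 (n-1) δ
  have hn1 : 1 ≤ Fintype.card N := Fintype.card_pos_iff.mpr ⟨i⟩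
  have hvi : v i - w i ≤ 2 * ((Fintype.card N : ℝ) - 1) * δ := by
    have hsplit : ∑ k ∈ Finset.univ.erase i, (v k - w k) + (v i - w i) = 0 := by
      rw [Finset.sum_erase_add Finset.univ _ (Finset.mem_univ i)]
      exact hsumzero
    have hbound : ∑ k ∈ Finset.univ.erase i, (w k - v k)
        ≤ ∑ k ∈ Finset.univ.erase i, (2 * δ) :=
      Finset.sum_le_sum fun k _ => by linarith [hwv k]
    rw [Finset.sum_const] at hbound
    have hcard : (Finset.univ.erase i).card = Fintype.card N - 1 := by
      rw [Finset.card_erase_of_mem (Finset.mem_univ i), Finset.card_univ]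
    rw [hcard] at hbound
    have hcast : ((Fintype.card N - 1 : ℕ) : ℝ) = (Fintype.card N : ℝ) - 1 := by
      rw [Nat.cast_sub hn1, Nat.cast_one]
    have hsum2 : ∑ k ∈ Finset.univ.erase i, (w k - v k)
        = - ∑ k ∈ Finset.univ.erase i, (v k - w k) := by
      rw [← Finset.sum_neg_distrib]
      exact Finset.sum_congr rfl fun k _ => by ring
    rw [hsum2] at hbound
    rw [nsmul_eq_mul, hcast] at hbound
    nlinarith [hbound, hsplit]
  -- conclude
  rw [hdev i ρi', hw i]
  have h1 := hcce' i ρi'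
  have : (2 : ℝ) * (Fintype.card N : ℝ) * δ
      = 2 * δ + 2 * ((Fintype.card N : ℝ) - 1) * δ := by ring
  rw [this]
  linarith [h1, hvi]
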